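/- arXiv:2004.02345 — 4 statements merged into one kernel-verified Lean document; each statement's English description precedes it below -/
import Mathlib

section
/- Let κ > 0 and r > 0, and let u, w ∈ ℝⁿ satisfy ⟨u, w − r·u⟩ ≥ (1/κ)·‖w − r·u‖². Then ⟨w, u⟩ ≥ (1/(κ + 2r))·‖w‖². -/
theorem stmt0 (n : ℕ) (κ r : ℝ) (hκ : 0 < κ) (hr : 0 < r)
    (u w : EuclideanSpace ℝ (Fin n))
    (h : (inner ℝ u (w - r • u) : ℝ) ≥ (1/κ) * ‖w - r • u‖^2) :
    (inner ℝ w u : ℝ) ≥ (1/(κ + 2*r)) * ‖w‖^2 := by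
  set v := w - r • u with hv
  have hw : w = v + r • u := by rw [hv]; abel
  have e1 : (inner ℝ w u : ℝ) = inner ℝ v u + r * ‖u‖^2 := by
    rw [hw, inner_add_left, real_inner_smul_left, real_inner_self_eq_norm_sq]
  have e2 : ‖w‖^2 = ‖v‖^2 + 2*(r*(inner ℝ v u : ℝ)) + r^2*‖u‖^2 := by
    rw [hw, norm_add_sq_real, real_inner_smul_right, norm_smul, mul_pow]
    rw [Real.norm_eq_abs, sq_abs]
  have hc : (inner ℝ v u : ℝ) = inner ℝ u v := real_inner_comm u v
  have hk : κ * (inner ℝ u v : ℝ) ≥ ‖v‖^2 := by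
    have := h
    rw [ge_iff_le, div_mul_eq_mul_div, div_le_iff₀ hκ] at this
    linarith [this]
  have hu2 : (0:ℝ) ≤ ‖u‖^2 := sq_nonneg _
  have hpos : 0 < κ + 2*r := by linarith
  rw [ge_iff_le, div_mul_eq_mul_div, div_le_iff₀ hpos]
  nlinarith [hk, hu2, mul_nonneg (mul_nonneg hr.le (by linarith : (0:ℝ) ≤ κ + r)) hu2]
end

section
/- Define ψ: ℝ → ℝ by ψ(x) = x²·sin(1/x) + 2x for x ≠ 0 and ψ(0) = 0. Then ψ is not semismooth* at 0; concretely, there exists ε₀ > 0 and for every δ > 0 a point x with 0 < |x| < δ such that |ψ(x) − ψ(0) − ψ'(x)·(x − 0)| ≥ ε₀·|x|. -/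
noncomputable def ψ (x : ℝ) : ℝ := if x = 0 then 0 else x^2 * Real.sin (1/x) + 2*x

lemma psi_deriv (x : ℝ) (hx : x ≠ 0) :
    deriv ψ x = 2*x*Real.sin (1/x) - Real.cos (1/x) + 2 := by
  have h1 : HasDerivAt (fun x : ℝ => 1/x) (-(1/x^2)) x := by
    simpa [one_div] using (hasDerivAt_inv hx)
  have h2 : HasDerivAt (fun x : ℝ => Real.sin (1/x)) (Real.cos (1/x) * (-(1/x^2))) x :=
    (Real.hasDerivAt_sin (1/x)).comp x h1
  have h3 : HasDerivAt (fun x : ℝ => x^2) ((2:ℕ) * x ^ 1) x := hasDerivAt_pow 2 x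
  have h5 : HasDerivAt (fun x : ℝ => 2*x) 2 x := by
    simpa using (hasDerivAt_id x).const_mul (2:ℝ)
  have h : HasDerivAt (fun x : ℝ => x^2 * Real.sin (1/x) + 2*x)
      (2*x*Real.sin (1/x) - Real.cos (1/x) + 2) x := by
    have h4 := (h3.mul h2).add h5
    refine h4.congr_deriv ?_
    have hx2 : x ^ 2 * (1 / x ^ 2) = (1:ℝ) := mul_one_div_cancel (pow_ne_zero 2 hx)
    linear_combination (-Real.cos (1/x)) * hx2
  have heq : ψ =ᶠ[nhds x] fun x => x^2 * Real.sin (1/x) + 2*x := by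
    filter_upwards [isOpen_ne.mem_nhds hx] with y hy
    simp [ψ, hy]
  rw [heq.deriv_eq]
  exact h.deriv

theorem stmt3 : ∃ ε₀ > (0:ℝ), ∀ δ > (0:ℝ), ∃ x : ℝ, 0 < |x| ∧ |x| < δ ∧
    |ψ x - ψ 0 - deriv ψ x * (x - 0)| ≥ ε₀ * |x| := by
  refine ⟨1, one_pos, fun δ hδ => ?_⟩
  obtain ⟨n, hn⟩ := exists_nat_gt (1/(Real.pi * δ))
  have hpi := Real.pi_pos
  set m : ℕ := n + 1 with hm
  have hmpos : (0:ℝ) < m := by positivity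
  set x : ℝ := 1 / (m * Real.pi) with hxdef
  have hxpos : 0 < x := by positivity
  have hxne : x ≠ 0 := ne_of_gt hxpos
  have hxinv : 1 / x = m * Real.pi := by
    rw [hxdef]; field_simp
  have hsin : Real.sin (1/x) = 0 := by
    rw [hxinv]; exact Real.sin_nat_mul_pi m
  have hcos : Real.cos (1/x) = (-1)^(m:ℕ) := by
    rw [hxinv]
    simpa using Real.cos_add_nat_mul_pi 0 m
  refine ⟨x, by rwa [abs_of_pos hxpos], ?_, ?_⟩
  · rw [abs_of_pos hxpos]
    have h1 : (1:ℝ)/(Real.pi * δ) < m := by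
      calc (1:ℝ)/(Real.pi * δ) < n := hn
        _ ≤ m := by exact_mod_cast Nat.le_succ n
    rw [div_lt_iff₀ (by positivity : (0:ℝ) < Real.pi * δ)] at h1
    show 1 / ((m:ℝ) * Real.pi) < δ
    rw [div_lt_iff₀ (by positivity)]
    nlinarith
  · have hψx : ψ x = x^2 * Real.sin (1/x) + 2*x := by simp [ψ, hxne]
    have hψ0 : ψ 0 = 0 := by simp [ψ]
    rw [hψx, hψ0, psi_deriv x hxne, hsin, hcos]
    have : x ^ 2 * 0 + 2 * x - 0 - (2 * x * 0 - (-1) ^ m + 2) * (x - 0)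
        = (-1)^m * x := by ring
    rw [this, abs_mul, abs_pow, abs_neg, abs_one, one_pow, one_mul]
end

section
/- Let φ: ℝⁿ → ℝ be continuously differentiable with ∇φ Lipschitz with constant ℓ near a tilt-stable minimizer x̄ (∇φ(x̄) = 0) such that φ(y) − φ(x) ≤ ⟨∇φ(y), y − x⟩ − (1/(2κ))‖y − x‖² for all x, y near x̄. Let (x_k) → x̄ with x_k ≠ x̄, d_k := x_{k+1} − x_k, and assume ‖x_{k+1} − x̄‖ = o(‖d_k‖) and ‖x_k − x̄‖/‖d_k‖ → 1. Then for any μ ∈ (0, 1/(4ℓκ)) there is k̄ such that for all k ≥ k̄: φ(x_k + d_k) ≤ φ(x_k) + μ⟨∇φ(x_k), d_k⟩. -/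
theorem stmt16 (n : ℕ) (φ : EuclideanSpace ℝ (Fin n) → ℝ) (xb : EuclideanSpace ℝ (Fin n))
    (ℓ κ μ ρ : ℝ) (hℓ : 0 < ℓ) (hκ : 0 < κ) (hρ : 0 < ρ)
    (hC1 : ContDiffOn ℝ 1 φ (Metric.ball xb ρ))
    (hlip : LipschitzOnWith (Real.toNNReal ℓ) (gradient φ) (Metric.ball xb ρ))
    (hgrad0 : gradient φ xb = 0)
    (hdec : ∀ x ∈ Metric.ball xb ρ, ∀ y ∈ Metric.ball xb ρ,
      φ y - φ x ≤ (inner ℝ (gradient φ y) (y - x) : ℝ) - (1/(2*κ)) * ‖y - x‖^2)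
    (x : ℕ → EuclideanSpace ℝ (Fin n))
    (hconv : Filter.Tendsto x Filter.atTop (nhds xb)) (hne : ∀ k, x k ≠ xb)
    (hq : Filter.Tendsto (fun k => ‖x (k+1) - xb‖ / ‖x (k+1) - x k‖) Filter.atTop (nhds 0))
    (hr : Filter.Tendsto (fun k => ‖x k - xb‖ / ‖x (k+1) - x k‖) Filter.atTop (nhds 1))
    (hμ0 : 0 < μ) (hμ1 : μ < 1/(4*ℓ*κ)) :
    ∃ kb : ℕ, ∀ k ≥ kb,
      φ (x k + (x (k+1) - x k)) ≤
        φ (x k) + μ * (inner ℝ (gradient φ (x k)) (x (k+1) - x k) : ℝ) := by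
  -- gradient norm bound
  have hgb : ∀ z ∈ Metric.ball xb ρ, ‖gradient φ z‖ ≤ ℓ * ‖z - xb‖ := by
    intro z hz
    have := hlip.dist_le_mul z hz xb (Metric.mem_ball_self hρ)
    rw [hgrad0, dist_zero_right, dist_eq_norm, Real.coe_toNNReal ℓ hℓ.le] at this
    exact this
  have hμℓ : μ * ℓ < 1/(4*κ) := by
    have h4 : 0 < 4 * ℓ * κ := by positivity
    have h5 := (lt_div_iff₀ h4).mp hμ1
    rw [lt_div_iff₀ (by positivity : (0:ℝ) < 4*κ)]
    nlinarith
  set δ := 1/(2*κ) - μ*ℓ with hδdef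
  have hδ : 0 < δ := by
    have : 1/(4*κ) < 1/(2*κ) := by
      apply div_lt_div_of_pos_left one_pos (by positivity) (by linarith)
    simp only [hδdef]; linarith
  -- eventual facts
  have hA : ∀ᶠ k in Filter.atTop, x k ∈ Metric.ball xb ρ :=
    hconv (Metric.ball_mem_nhds xb hρ)
  have hB : ∀ᶠ k in Filter.atTop, x (k+1) ∈ Metric.ball xb ρ := by
    obtain ⟨N, hN⟩ := hA.exists_forall_of_atTop
    exact Filter.eventually_atTop.2 ⟨N, fun k hk => hN (k+1) (by omega)⟩
  have hC : ∀ᶠ k in Filter.atTop, ‖x (k+1) - xb‖ / ‖x (k+1) - x k‖ < δ/(2*ℓ) := by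
    have := hq (Metric.ball_mem_nhds (0:ℝ) (show (0:ℝ) < δ/(2*ℓ) by positivity))
    filter_upwards [this] with k hk
    have := hk.out
    rw [Real.ball_eq_Ioo] at this
    simpa using this.2
  have hD : ∀ᶠ k in Filter.atTop,
      ‖x k - xb‖ / ‖x (k+1) - x k‖ ∈ Set.Ioo (1/2 : ℝ) (1 + δ/(2*μ*ℓ)) := by
    have hpos : (0:ℝ) < δ/(2*μ*ℓ) := by positivity
    have hmem : Set.Ioo (1/2 : ℝ) (1 + δ/(2*μ*ℓ)) ∈ nhds (1:ℝ) :=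
      Ioo_mem_nhds (by norm_num) (by linarith)
    exact hr hmem
  obtain ⟨kb, hkb⟩ := ((hA.and hB).and (hC.and hD)).exists_forall_of_atTop
  refine ⟨kb, fun k hk => ?_⟩
  obtain ⟨⟨hxk, hxk1⟩, hCk, hDk⟩ := hkb k hk
  set d : EuclideanSpace ℝ (Fin n) := x (k+1) - x k with hd
  have hadd : x k + d = x (k+1) := by simp [hd]
  set nd := ‖x (k+1) - x k‖ with hnd
  have hnd0 : 0 < nd := by
    rcases eq_or_lt_of_le (norm_nonneg (x (k+1) - x k)) with h | h
    · exfalso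
      have h2 := hDk.1
      have hndz : nd = 0 := hnd.trans h.symm
      rw [hndz, div_zero] at h2
      linarith
    · exact h
  set q := ‖x (k+1) - xb‖ / nd with hqdef
  set r := ‖x k - xb‖ / nd with hrdef
  have hq1 : ‖x (k+1) - xb‖ = q * nd := (div_mul_cancel₀ _ hnd0.ne').symm
  have hr1 : ‖x k - xb‖ = r * nd := (div_mul_cancel₀ _ hnd0.ne').symm
  have hq0 : 0 ≤ q := by positivity
  have hr0 : 0 ≤ r := by positivity
  have hqlt : q < δ/(2*ℓ) := hCk
  have hrlt : r < 1 + δ/(2*μ*ℓ) := hDk.2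
  -- main decrease estimate
  have h1 := hdec (x k) hxk (x (k+1)) hxk1
  -- inner product bounds
  have h2 : (inner ℝ (gradient φ (x (k+1))) (x (k+1) - x k) : ℝ) ≤ ℓ * (q * nd) * nd := by
    calc (inner ℝ (gradient φ (x (k+1))) (x (k+1) - x k) : ℝ)
        ≤ ‖gradient φ (x (k+1))‖ * ‖x (k+1) - x k‖ := real_inner_le_norm _ _
      _ ≤ (ℓ * ‖x (k+1) - xb‖) * nd := by
          apply mul_le_mul_of_nonneg_right (hgb _ hxk1)
          exact norm_nonneg _
      _ = ℓ * (q * nd) * nd := by rw [hq1]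
  have h3 : -(ℓ * (r * nd) * nd) ≤ (inner ℝ (gradient φ (x k)) (x (k+1) - x k) : ℝ) := by
    have habs : |(inner ℝ (gradient φ (x k)) (x (k+1) - x k) : ℝ)| ≤ ℓ * (r * nd) * nd := by
      calc |(inner ℝ (gradient φ (x k)) (x (k+1) - x k) : ℝ)|
          ≤ ‖gradient φ (x k)‖ * ‖x (k+1) - x k‖ := abs_real_inner_le_norm _ _
        _ ≤ (ℓ * ‖x k - xb‖) * nd := by
            apply mul_le_mul_of_nonneg_right (hgb _ hxk)
            exact norm_nonneg _
        _ = ℓ * (r * nd) * nd := by rw [hr1]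
    linarith [neg_abs_le (inner ℝ (gradient φ (x k)) (x (k+1) - x k) : ℝ)]
  rw [hadd]
  have hkey : ℓ * q + μ * (ℓ * r) ≤ 1/(2*κ) := by
    have e1 : ℓ * q < δ/2 := by
      have := mul_lt_mul_of_pos_left hqlt hℓ
      calc ℓ * q < ℓ * (δ/(2*ℓ)) := this
        _ = δ/2 := by field_simp
    have e2 : μ * (ℓ * r) < μ*ℓ + δ/2 := by
      have := mul_lt_mul_of_pos_left hrlt (by positivity : 0 < μ*ℓ)
      calc μ * (ℓ * r) = (μ*ℓ) * r := by ring
        _ < (μ*ℓ) * (1 + δ/(2*μ*ℓ)) := this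
        _ = μ*ℓ + δ/2 := by field_simp
    simp only [hδdef] at e1 e2 ⊢
    linarith
  have hnd2 : nd^2 = nd * nd := sq nd
  nlinarith [h1, h2, h3, mul_le_mul_of_nonneg_right hkey (by positivity : (0:ℝ) ≤ nd * nd),
    sq_nonneg nd]
end

section
/- Let Ω ⊆ ℝⁿ × ℝⁿ and (x̄, v̄) ∈ Ω, let κ > 0, η > 0, and suppose ⟨u, w⟩ ≥ (1/κ)‖w‖² for all (w, u) ∈ T_Ω(x, v) whenever (x, v) ∈ Ω with ‖(x, v) − (x̄, 0)‖ ≤ η. Fix r > 0 and let G := { (x, v) : (x − r·v, v) ∈ Ω }. Then there is η' > 0 such that ⟨w, u⟩ ≥ (1/(κ + 2r))‖w‖² for all (w, u) ∈ T_G(x, v) whenever (x, v) ∈ G with ‖(x, v) − (x̄ + r·v̄, v̄)‖ ≤ η' and v̄ = 0. -/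
open Filter Topology

lemma tangent_aux {E : Type*} [NormedAddCommGroup E] [NormedSpace ℝ E]
    (Ω : Set (E × E)) (r : ℝ) {x v w u : E}
    (h : (w, u) ∈ tangentConeAt ℝ {p : E × E | (p.1 - r • p.2, p.2) ∈ Ω} (x, v)) :
    (w - r • u, u) ∈ tangentConeAt ℝ Ω (x - r • v, v) := by
  obtain ⟨α, l, hl, c, d, hd0, hmem, hlim⟩ := exists_fun_of_mem_tangentConeAt h
  refine mem_tangentConeAt_of_seq l c (fun n => ((d n).1 - r • (d n).2, (d n).2)) ?_ ?_ ?_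
  · have := (((continuous_fst.tendsto _).comp hd0).sub
      (((continuous_snd.tendsto _).comp hd0).const_smul r)).prodMk_nhds
      ((continuous_snd.tendsto _).comp hd0)
    simpa [← Prod.zero_eq_mk] using this
  · filter_upwards [hmem] with n hn
    have heq : (x - r • v, v) + ((d n).1 - r • (d n).2, (d n).2)
        = (((x, v) + d n).1 - r • ((x, v) + d n).2, ((x, v) + d n).2) := by
      rw [Prod.ext_iff]
      constructor
      · simp [smul_add]; abel
      · simp
    show (x - r • v, v) + ((d n).1 - r • (d n).2, (d n).2) ∈ Ω
    rw [heq]; exact hn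
  · have h1 : Tendsto (fun n => (c n • d n).1) l (𝓝 w) :=
      (continuous_fst.tendsto _).comp hlim
    have h2 : Tendsto (fun n => (c n • d n).2) l (𝓝 u) :=
      (continuous_snd.tendsto _).comp hlim
    have := (h1.sub (h2.const_smul r)).prodMk_nhds h2
    convert this using 2 with n
    simp [Prod.smul_def, smul_sub, smul_comm (c n) r]

theorem stmt17 (n : ℕ)
    (Ω : Set (EuclideanSpace ℝ (Fin n) × EuclideanSpace ℝ (Fin n)))
    (xb vb : EuclideanSpace ℝ (Fin n)) (hmem : (xb, vb) ∈ Ω)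
    (κ η r : ℝ) (hκ : 0 < κ) (hη : 0 < η) (hr : 0 < r) (hvb : vb = 0)
    (hΩ : ∀ x v : EuclideanSpace ℝ (Fin n), (x, v) ∈ Ω →
      ‖(x, v) - (xb, (0 : EuclideanSpace ℝ (Fin n)))‖ ≤ η →
      ∀ w u : EuclideanSpace ℝ (Fin n), (w, u) ∈ tangentConeAt ℝ Ω (x, v) →
        (inner ℝ u w : ℝ) ≥ (1/κ) * ‖w‖^2) :
    ∃ η' > (0:ℝ), ∀ x v : EuclideanSpace ℝ (Fin n),
      (x, v) ∈ {p : EuclideanSpace ℝ (Fin n) × EuclideanSpace ℝ (Fin n) |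
        (p.1 - r • p.2, p.2) ∈ Ω} →
      ‖(x, v) - (xb + r • vb, vb)‖ ≤ η' →
      ∀ w u : EuclideanSpace ℝ (Fin n),
        (w, u) ∈ tangentConeAt ℝ {p : EuclideanSpace ℝ (Fin n) × EuclideanSpace ℝ (Fin n) |
          (p.1 - r • p.2, p.2) ∈ Ω} (x, v) →
        (inner ℝ w u : ℝ) ≥ (1/(κ + 2*r)) * ‖w‖^2 := by
  subst hvb
  refine ⟨η / (1 + r), by positivity, fun x v hxv hnorm w u hwu => ?_⟩
  have hG : (x - r • v, v) ∈ Ω := hxv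
  -- norm bound
  have hb : ‖(x - r • v, v) - (xb, (0 : EuclideanSpace ℝ (Fin n)))‖ ≤ η := by
    have hx : ‖x - xb‖ ≤ η / (1 + r) := by
      have := (norm_fst_le ((x, v) - (xb + r • (0:EuclideanSpace ℝ (Fin n)), 0))).trans hnorm
      simpa using this
    have hv : ‖v‖ ≤ η / (1 + r) := by
      have := (norm_snd_le ((x, v) - (xb + r • (0:EuclideanSpace ℝ (Fin n)), 0))).trans hnorm
      simpa using this
    have h1r : (0:ℝ) < 1 + r := by linarith
    have key : η / (1 + r) * (1 + r) = η := div_mul_cancel₀ _ h1r.ne'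
    rw [Prod.norm_def]
    apply max_le
    · have : ‖x - r • v - xb‖ ≤ ‖x - xb‖ + r * ‖v‖ := by
        calc ‖x - r • v - xb‖ = ‖(x - xb) + (-(r • v))‖ := by congr 1; abel
          _ ≤ ‖x - xb‖ + ‖r • v‖ := by simpa using norm_add_le (x - xb) (-(r • v))
          _ = ‖x - xb‖ + r * ‖v‖ := by rw [norm_smul, Real.norm_of_nonneg hr.le]
      simp only [Prod.fst_sub, Prod.snd_sub, sub_zero]
      calc ‖x - r • v - xb‖ ≤ ‖x - xb‖ + r * ‖v‖ := this
        _ ≤ η / (1 + r) + r * (η / (1 + r)) := by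
            have := mul_le_mul_of_nonneg_left hv hr.le; linarith
        _ = η / (1 + r) * (1 + r) := by ring
        _ = η := key
    · simp only [Prod.fst_sub, Prod.snd_sub, sub_zero]
      calc ‖v‖ ≤ η / (1 + r) := hv
        _ ≤ η / (1 + r) * (1 + r) := by
            nlinarith [div_nonneg hη.le h1r.le]
        _ = η := key
  have htan := tangent_aux Ω r hwu
  have hineq := hΩ (x - r • v) v hG hb (w - r • u) u htan
  -- algebra
  have hwu' : (inner ℝ u (w - r • u) : ℝ) = (inner ℝ w u : ℝ) - r * ‖u‖^2 := by
    rw [inner_sub_right, inner_smul_right, real_inner_self_eq_norm_sq,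
      real_inner_comm]
  have hnormsq : ‖w - r • u‖^2 = ‖w‖^2 - 2 * r * (inner ℝ w u : ℝ) + r^2 * ‖u‖^2 := by
    rw [norm_sub_sq_real, norm_smul, real_inner_smul_right, Real.norm_of_nonneg hr.le,
      mul_pow]
    ring
  rw [hwu', hnormsq] at hineq
  have hκ2 : (0:ℝ) < κ + 2 * r := by linarith
  rw [ge_iff_le, div_mul_eq_mul_div, one_mul, div_le_iff₀ hκ2]
  rw [ge_iff_le, one_div, inv_mul_le_iff₀ hκ] at hineq
  nlinarith [sq_nonneg ‖u‖, sq_nonneg ‖w‖, mul_nonneg (mul_nonneg hκ.le hr.le) (sq_nonneg ‖u‖), mul_nonneg (mul_nonneg hr.le hr.le) (sq_nonneg ‖u‖)]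
end
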